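/- The function ψ₁(x,y) = (x + 2x² + xy − 2y²)/Q(x,y), with Q(x,y) = 160 + 4x² + 4y² + 16x³ + 4x²y + 16xy² + 4y³ + 17(x²+y²)², satisfies (−Δ + u)ψ₁ = 0 on ℝ², where u = −5120(1 + 8x + 2y + 17x² + 17y²)/Q². -/

import Mathlib

/-- Partial derivative in the first coordinate. -/
noncomputable def pdx (f : ℝ × ℝ → ℝ) : ℝ × ℝ → ℝ :=
  fun p => deriv (fun t => f (t, p.2)) p.1

/-- Partial derivative in the second coordinate. -/
noncomputable def pdy (f : ℝ × ℝ → ℝ) : ℝ × ℝ → ℝ :=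
  fun p => deriv (fun t => f (p.1, t)) p.2

/-- Laplacian on ℝ². -/
noncomputable def lap (f : ℝ × ℝ → ℝ) : ℝ × ℝ → ℝ :=
  fun p => pdx (pdx f) p + pdy (pdy f) p

/-- The denominator polynomial Q from Example 1. -/
noncomputable def Qpoly (p : ℝ × ℝ) : ℝ :=
  160 + 4 * p.1 ^ 2 + 4 * p.2 ^ 2 + 16 * p.1 ^ 3 + 4 * p.1 ^ 2 * p.2
    + 16 * p.1 * p.2 ^ 2 + 4 * p.2 ^ 3 + 17 * (p.1 ^ 2 + p.2 ^ 2) ^ 2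

/-- The potential u from Example 1. -/
noncomputable def upot (p : ℝ × ℝ) : ℝ :=
  -5120 * (1 + 8 * p.1 + 2 * p.2 + 17 * p.1 ^ 2 + 17 * p.2 ^ 2) / (Qpoly p) ^ 2

/-- The eigenfunction ψ₁ from Example 1. -/
noncomputable def psi1 (p : ℝ × ℝ) : ℝ :=
  (p.1 + 2 * p.1 ^ 2 + p.1 * p.2 - 2 * p.2 ^ 2) / Qpoly p

/-- The eigenfunction ψ₂ from Example 1. -/
noncomputable def psi2 (p : ℝ × ℝ) : ℝ :=
  (2 * p.1 + 2 * p.2 + 3 * p.1 ^ 2 + 10 * p.1 * p.2 - 3 * p.2 ^ 2) / Qpoly p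

/- ### Auxiliary material -/

lemma hda_congr {f g : ℝ → ℝ} {d e x : ℝ} (h : HasDerivAt f d x) (h1 : f = g) (h2 : d = e) :
    HasDerivAt g e x := h1 ▸ h2 ▸ h

lemma hd5 (a b c d e x : ℝ) :
    HasDerivAt (fun t : ℝ => a + b*t + c*t^2 + d*t^3 + e*t^4)
      (b + 2*c*x + 3*d*x^2 + 4*e*x^3) x := by
  have h1 : HasDerivAt (fun t : ℝ => t) 1 x := hasDerivAt_id' ..
  have h2 := hasDerivAt_pow 2 x
  have h3 := hasDerivAt_pow 3 x
  have h4 := hasDerivAt_pow 4 x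
  have H := ((((hasDerivAt_const x a).add (h1.const_mul b)).add (h2.const_mul c)).add
      (h3.const_mul d)).add (h4.const_mul e)
  exact hda_congr H rfl (by push_cast; ring)

/-- Numerator of ψ₁. -/
noncomputable def Nf (p : ℝ × ℝ) : ℝ := p.1 + 2 * p.1 ^ 2 + p.1 * p.2 - 2 * p.2 ^ 2

/-- ∂Q/∂x. -/
noncomputable def Qdx (p : ℝ × ℝ) : ℝ :=
  8*p.1 + 48*p.1^2 + 8*p.1*p.2 + 16*p.2^2 + 68*p.1^3 + 68*p.1*p.2^2

/-- ∂Q/∂y. -/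
noncomputable def Qdy (p : ℝ × ℝ) : ℝ :=
  8*p.2 + 4*p.1^2 + 32*p.1*p.2 + 12*p.2^2 + 68*p.1^2*p.2 + 68*p.2^3

/-- ∂²Q/∂x². -/
noncomputable def Qdxx (p : ℝ × ℝ) : ℝ := 8 + 96*p.1 + 8*p.2 + 204*p.1^2 + 68*p.2^2

/-- ∂²Q/∂y². -/
noncomputable def Qdyy (p : ℝ × ℝ) : ℝ := 8 + 32*p.1 + 24*p.2 + 68*p.1^2 + 204*p.2^2

/-- ∂ψ₁/∂x. -/
noncomputable def f1 (p : ℝ × ℝ) : ℝ :=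
  ((1 + 4*p.1 + p.2) * Qpoly p - Nf p * Qdx p) / (Qpoly p) ^ 2

/-- ∂ψ₁/∂y. -/
noncomputable def f2 (p : ℝ × ℝ) : ℝ :=
  ((p.1 - 4*p.2) * Qpoly p - Nf p * Qdy p) / (Qpoly p) ^ 2

/-- ∂²ψ₁/∂x². -/
noncomputable def g1 (p : ℝ × ℝ) : ℝ :=
  (((4 * Qpoly p + (1 + 4*p.1 + p.2) * Qdx p) - ((1 + 4*p.1 + p.2) * Qdx p + Nf p * Qdxx p))
      * (Qpoly p)^2
    - ((1 + 4*p.1 + p.2) * Qpoly p - Nf p * Qdx p) * (Qdx p * Qpoly p + Qpoly p * Qdx p))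
    / ((Qpoly p)^2)^2

/-- ∂²ψ₁/∂y². -/
noncomputable def g2 (p : ℝ × ℝ) : ℝ :=
  ((((-4) * Qpoly p + (p.1 - 4*p.2) * Qdy p) - ((p.1 - 4*p.2) * Qdy p + Nf p * Qdyy p))
      * (Qpoly p)^2
    - ((p.1 - 4*p.2) * Qpoly p - Nf p * Qdy p) * (Qdy p * Qpoly p + Qpoly p * Qdy p))
    / ((Qpoly p)^2)^2

lemma Qpos (p : ℝ × ℝ) : 0 < Qpoly p := by
  obtain ⟨x, y⟩ := p
  simp only [Qpoly]
  nlinarith [sq_nonneg (34*(x^2+y^2) + (16*x + 4*y)), sq_nonneg (4*x - 16*y),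
    sq_nonneg x, sq_nonneg y, sq_nonneg (x^2+y^2)]

lemma hQdx (x y : ℝ) : HasDerivAt (fun t => Qpoly (t, y)) (Qdx (x, y)) x := by
  have h := hd5 (160+4*y^2+4*y^3+17*y^4) (16*y^2) (4+4*y+34*y^2) 16 17 x
  exact hda_congr h (by funext t; simp only [Qpoly]; ring) (by simp only [Qdx]; ring)

lemma hQdy (x y : ℝ) : HasDerivAt (fun t => Qpoly (x, t)) (Qdy (x, y)) y := by
  have h := hd5 (160+4*x^2+16*x^3+17*x^4) (4*x^2) (4+16*x+34*x^2) 4 17 y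
  exact hda_congr h (by funext t; simp only [Qpoly]; ring) (by simp only [Qdy]; ring)

lemma hNx (x y : ℝ) : HasDerivAt (fun t => Nf (t, y)) (1 + 4*x + y) x := by
  have h := hd5 (-2*y^2) (1+y) 2 0 0 x
  exact hda_congr h (by funext t; simp only [Nf]; ring) (by ring)

lemma hNy (x y : ℝ) : HasDerivAt (fun t => Nf (x, t)) (x - 4*y) y := by
  have h := hd5 (x+2*x^2) x (-2) 0 0 y
  exact hda_congr h (by funext t; simp only [Nf]; ring) (by ring)

lemma hNxx (x y : ℝ) : HasDerivAt (fun t : ℝ => 1 + 4*t + y) (4 : ℝ) x := by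
  have h := hd5 (1+y) 4 0 0 0 x
  exact hda_congr h (by funext t; ring) (by ring)

lemma hNyy (x y : ℝ) : HasDerivAt (fun t : ℝ => x - 4*t) (-4 : ℝ) y := by
  have h := hd5 x (-4) 0 0 0 y
  exact hda_congr h (by funext t; ring) (by ring)

lemma hQdxx (x y : ℝ) : HasDerivAt (fun t => Qdx (t, y)) (Qdxx (x, y)) x := by
  have h := hd5 (16*y^2) (8+8*y+68*y^2) 48 68 0 x
  exact hda_congr h (by funext t; simp only [Qdx]; ring) (by simp only [Qdxx]; ring)

lemma hQdyy (x y : ℝ) : HasDerivAt (fun t => Qdy (x, t)) (Qdyy (x, y)) y := by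
  have h := hd5 (4*x^2) (8+32*x+68*x^2) 12 68 0 y
  exact hda_congr h (by funext t; simp only [Qdy]; ring) (by simp only [Qdyy]; ring)

lemma hpsi1x (x y : ℝ) : HasDerivAt (fun t => psi1 (t, y)) (f1 (x, y)) x := by
  have h := (hNx x y).div (hQdx x y) (Qpos (x, y)).ne'
  exact hda_congr h (by funext t; simp only [psi1, Nf, Pi.div_apply]) (by simp only [f1])

lemma hpsi1y (x y : ℝ) : HasDerivAt (fun t => psi1 (x, t)) (f2 (x, y)) y := by
  have h := (hNy x y).div (hQdy x y) (Qpos (x, y)).ne'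
  exact hda_congr h (by funext t; simp only [psi1, Nf, Pi.div_apply]) (by simp only [f2])

lemma pdx_psi1 : pdx psi1 = f1 := by
  funext q
  have := (hpsi1x q.1 q.2).deriv
  simpa [pdx] using this

lemma pdy_psi1 : pdy psi1 = f2 := by
  funext q
  have := (hpsi1y q.1 q.2).deriv
  simpa [pdy] using this

lemma hf1x (x y : ℝ) : HasDerivAt (fun t => f1 (t, y)) (g1 (x, y)) x := by
  have hQ := hQdx x y
  have hQ2 : HasDerivAt (fun t => (Qpoly (t, y))^2)
      (Qdx (x,y) * Qpoly (x,y) + Qpoly (x,y) * Qdx (x,y)) x := by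
    have := hQ.mul hQ
    exact hda_congr this (by funext t; simp only [Pi.mul_apply]; ring) rfl
  have hA : HasDerivAt (fun t => (1 + 4*t + y) * Qpoly (t, y) - Nf (t, y) * Qdx (t, y))
      ((4 * Qpoly (x,y) + (1 + 4*x + y) * Qdx (x,y))
        - ((1 + 4*x + y) * Qdx (x,y) + Nf (x,y) * Qdxx (x,y))) x := by
    exact ((hNxx x y).mul hQ).sub ((hNx x y).mul (hQdxx x y))
  have hne : ((Qpoly (x, y))^2) ≠ 0 := pow_ne_zero 2 (Qpos (x, y)).ne'
  have h := hA.div hQ2 hne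
  exact hda_congr h (by funext t; simp only [f1, Pi.div_apply]) (by simp only [g1])

lemma hf2y (x y : ℝ) : HasDerivAt (fun t => f2 (x, t)) (g2 (x, y)) y := by
  have hQ := hQdy x y
  have hQ2 : HasDerivAt (fun t => (Qpoly (x, t))^2)
      (Qdy (x,y) * Qpoly (x,y) + Qpoly (x,y) * Qdy (x,y)) y := by
    have := hQ.mul hQ
    exact hda_congr this (by funext t; simp only [Pi.mul_apply]; ring) rfl
  have hA : HasDerivAt (fun t => (x - 4*t) * Qpoly (x, t) - Nf (x, t) * Qdy (x, t))
      (((-4) * Qpoly (x,y) + (x - 4*y) * Qdy (x,y))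
        - ((x - 4*y) * Qdy (x,y) + Nf (x,y) * Qdyy (x,y))) y := by
    exact ((hNyy x y).mul hQ).sub ((hNy x y).mul (hQdyy x y))
  have hne : ((Qpoly (x, y))^2) ≠ 0 := pow_ne_zero 2 (Qpos (x, y)).ne'
  have h := hA.div hQ2 hne
  exact hda_congr h (by funext t; simp only [f2, Pi.div_apply]) (by simp only [g2])

theorem psi1_in_kernel :
    ∀ p : ℝ × ℝ, -lap psi1 p + upot p * psi1 p = 0 := by
  intro p
  obtain ⟨x, y⟩ := p
  have hx : pdx (pdx psi1) (x, y) = g1 (x, y) := by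
    rw [pdx_psi1]
    exact (hf1x x y).deriv
  have hy : pdy (pdy psi1) (x, y) = g2 (x, y) := by
    rw [pdy_psi1]
    exact (hf2y x y).deriv
  have hQ : Qpoly (x, y) ≠ 0 := (Qpos (x, y)).ne'
  simp only [lap, hx, hy, g1, g2, upot, psi1, Nf, Qdx, Qdy, Qdxx, Qdyy, Qpoly] at *
  field_simp
  ring
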